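/- Let τ be a nonnegative random variable with E[τ²] < ∞ and Var(τ) > 0, and suppose a nonnegative random variable ξ satisfies E[exp(−sξ)] = f̂(ks + s²/2) for all s ≥ 0, where f̂ is the Laplace transform of τ and k > 0. Then E[ξ] = k·E[τ], E[ξ²] = k²·E[τ²] − E[τ], and consequently k ≥ √(E[τ]) / σ(τ), where σ(τ) = √Var(τ). In particular, no such ξ exists when k < √(E[τ])/σ(τ). -/

import Mathlib

open MeasureTheory ProbabilityTheory Real
open Filter Topology


lemma mnc_L1 (u : ℝ) : 1 - Real.exp (-u) ≤ u := by
  have := Real.add_one_le_exp (-u); linarith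

lemma mnc_L2 (u : ℝ) : 0 ≤ Real.exp (-u) - 1 + u := by
  have := Real.add_one_le_exp (-u); linarith

lemma mnc_L3 {u : ℝ} (hu : 0 ≤ u) : Real.exp (-u) - 1 + u ≤ u ^ 2 := by
  rcases le_or_gt u 1 with h | h
  · have h1 : |(-u)| ≤ 1 := by rw [abs_neg, abs_of_nonneg hu]; exact h
    have := Real.abs_exp_sub_one_sub_id_le h1
    have h2 := abs_le.1 this
    nlinarith [h2.2]
  · have h1 : Real.exp (-u) ≤ 1 := Real.exp_le_one_iff.2 (by linarith)
    nlinarith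

lemma mnc_L4 {u : ℝ} (hu : 0 ≤ u) (hu1 : u ≤ 1) :
    |Real.exp (-u) - (1 - u + u ^ 2 / 2)| ≤ u ^ 3 := by
  have h1 : |(-u)| ≤ 1 := by rw [abs_neg, abs_of_nonneg hu]; exact hu1
  have := Real.exp_bound h1 (n := 3) (by norm_num)
  have hsum : (∑ m ∈ Finset.range 3, (-u) ^ m / m.factorial) = 1 - u + u ^ 2 / 2 := by
    simp [Finset.sum_range_succ, Nat.factorial]; ring
  rw [hsum] at this
  have h2 : |(-u)| ^ 3 * ((3:ℕ).succ / ((3:ℕ).factorial * 3)) ≤ u ^ 3 := by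
    rw [abs_neg, abs_of_nonneg hu]
    have h3 : ((3:ℕ).succ / ((3:ℕ).factorial * 3) : ℝ) = 2/9 := by norm_num [Nat.factorial]
    rw [h3]; nlinarith [pow_nonneg hu 3]
  exact this.trans h2

/-- First-order limit. -/
lemma mnc_P1 {e u : ℕ → ℝ} {K c : ℝ} (he : ∀ n, 0 < e n) (hu : ∀ n, 0 ≤ u n)
    (hut : Tendsto u atTop (𝓝 0))
    (hrat : Tendsto (fun n => u n / e n) atTop (𝓝 K)) (hc : 0 ≤ c) :
    Tendsto (fun n => (1 - Real.exp (-(u n * c))) / e n) atTop (𝓝 (K * c)) := by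
  have heq : ∀ n, (1 - Real.exp (-(u n * c))) / e n
      = (u n / e n) * c - (Real.exp (-(u n * c)) - 1 + u n * c) / e n := fun n => by
    have h := (he n).ne'
    field_simp; ring
  have herr : Tendsto (fun n => (Real.exp (-(u n * c)) - 1 + u n * c) / e n) atTop (𝓝 0) := by
    apply squeeze_zero (fun n => div_nonneg (mnc_L2 _) (he n).le)
    · intro n
      have h1 : Real.exp (-(u n * c)) - 1 + u n * c ≤ (u n * c) ^ 2 :=
        mnc_L3 (mul_nonneg (hu n) hc)
      calc (Real.exp (-(u n * c)) - 1 + u n * c) / e n ≤ (u n * c) ^ 2 / e n := by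
            gcongr
            exact (he n).le
          _ = (u n / e n) * u n * c ^ 2 := by
            have h := (he n).ne'
            field_simp
    · have : Tendsto (fun n => (u n / e n) * u n * c ^ 2) atTop (𝓝 (K * 0 * c ^ 2)) :=
        (hrat.mul hut).mul_const _
      simpa using this
  have := ((hrat.mul_const c).sub herr)
  simp only [sub_zero] at this
  exact Tendsto.congr (fun n => (heq n).symm) this

/-- Second-order limit. -/
lemma mnc_P2 {e u : ℕ → ℝ} {K c : ℝ} (he : ∀ n, 0 < e n) (hu : ∀ n, 0 ≤ u n)
    (hut : Tendsto u atTop (𝓝 0))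
    (hrat : Tendsto (fun n => u n / e n) atTop (𝓝 K)) (hc : 0 ≤ c) :
    Tendsto (fun n => (Real.exp (-(u n * c)) - 1 + u n * c) / (e n) ^ 2) atTop
      (𝓝 (K ^ 2 * c ^ 2 / 2)) := by
  have heq : ∀ n, (Real.exp (-(u n * c)) - 1 + u n * c) / (e n) ^ 2
      = (u n / e n) ^ 2 * c ^ 2 / 2
        + (Real.exp (-(u n * c)) - (1 - u n * c + (u n * c) ^ 2 / 2)) / (e n) ^ 2 := fun n => by
    have h := (he n).ne'
    field_simp
    ring
  have herr : Tendsto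
      (fun n => (Real.exp (-(u n * c)) - (1 - u n * c + (u n * c) ^ 2 / 2)) / (e n) ^ 2)
      atTop (𝓝 0) := by
    rw [tendsto_zero_iff_abs_tendsto_zero]
    apply squeeze_zero' (Eventually.of_forall fun n => abs_nonneg _)
    · have hev : ∀ᶠ n in atTop, u n * c ≤ 1 := by
        have h := (hut.mul_const c)
        simp only [zero_mul] at h
        exact h.eventually_le_const (by norm_num)
      filter_upwards [hev] with n hn
      have h4 := mnc_L4 (mul_nonneg (hu n) hc) hn
      have he2 : (0:ℝ) < (e n) ^ 2 := pow_pos (he n) 2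
      calc |(Real.exp (-(u n * c)) - (1 - u n * c + (u n * c) ^ 2 / 2)) / (e n) ^ 2|
          = |Real.exp (-(u n * c)) - (1 - u n * c + (u n * c) ^ 2 / 2)| / (e n) ^ 2 := by
            rw [abs_div, abs_of_nonneg he2.le]
        _ ≤ (u n * c) ^ 3 / (e n) ^ 2 := by gcongr
        _ = (u n / e n) ^ 2 * u n * c ^ 3 := by
            have h := (he n).ne'
            field_simp
    · have h : Tendsto (fun n => (u n / e n) ^ 2 * u n * c ^ 3) atTop
          (𝓝 ((K ^ 2 * 0) * c ^ 3)) := (((hrat.pow 2).mul hut).mul_const _)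
      simpa using h
  have hmain : Tendsto (fun n => (u n / e n) ^ 2 * c ^ 2 / 2) atTop (𝓝 (K ^ 2 * c ^ 2 / 2)) :=
    ((hrat.pow 2).mul_const _).div_const _
  have h := hmain.add herr
  simp only [add_zero] at h
  exact Tendsto.congr (fun n => (heq n).symm) h

theorem moment_necessary_condition
    {Ω : Type*} [MeasureSpace Ω] [IsProbabilityMeasure (volume : Measure Ω)]
    (τ ξ : Ω → ℝ) (hτm : Measurable τ) (hξm : Measurable ξ)
    (hτ : ∀ ω, 0 ≤ τ ω) (hξ : ∀ ω, 0 ≤ ξ ω)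
    (hτ2 : Integrable (fun ω => (τ ω) ^ 2))
    (hvar : 0 < variance τ volume)
    (k : ℝ) (hk : 0 < k)
    (hsol : ∀ s : ℝ, 0 ≤ s →
      (∫ ω, Real.exp (-s * ξ ω)) = ∫ ω, Real.exp (-(k * s + s ^ 2 / 2) * τ ω)) :
    (∫ ω, ξ ω) = k * ∫ ω, τ ω ∧
      (∫ ω, (ξ ω) ^ 2) = k ^ 2 * (∫ ω, (τ ω) ^ 2) - ∫ ω, τ ω ∧
      Real.sqrt (∫ ω, τ ω) / Real.sqrt (variance τ volume) ≤ k := by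
  -- τ is integrable
  have hτ1 : Integrable τ := by
    refine (hτ2.add (integrable_const 1)).mono' hτm.aestronglyMeasurable ?_
    refine Eventually.of_forall fun ω => ?_
    rw [Real.norm_eq_abs, abs_of_nonneg (hτ ω)]
    simp only [Pi.add_apply]
    nlinarith [sq_nonneg (τ ω - 1)]
  -- integrability of the exponentials
  have hexp_int : ∀ (a : ℝ) (X : Ω → ℝ), Measurable X → (∀ ω, 0 ≤ X ω) → 0 ≤ a →
      Integrable (fun ω => Real.exp (-(a * X ω))) := by
    intro a X hXm hX0 ha
    refine (integrable_const 1).mono' ?_ ?_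
    · exact (((hXm.const_mul a).neg).exp).aestronglyMeasurable
    · refine Eventually.of_forall fun ω => ?_
      rw [Real.norm_eq_abs, abs_of_nonneg (Real.exp_pos _).le]
      exact Real.exp_le_one_iff.2 (by nlinarith [mul_nonneg ha (hX0 ω)])
  -- the sequence
  set e : ℕ → ℝ := fun n => 1 / (n + 1) with he_def
  have hep : ∀ n, 0 < e n := fun n => by positivity
  have he1 : ∀ n, e n ≤ 1 := fun n => by
    rw [he_def]; rw [div_le_one (by positivity)]; push_cast; linarith [Nat.cast_nonneg (α := ℝ) n]
  have het : Tendsto e atTop (𝓝 0) := tendsto_one_div_add_atTop_nhds_zero_nat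
  set a : ℕ → ℝ := fun n => k * e n + (e n) ^ 2 / 2 with ha_def
  have hap : ∀ n, 0 < a n := fun n => by
    have := hep n; positivity
  have hat : Tendsto a atTop (𝓝 0) := by
    rw [show (0:ℝ) = k * 0 + 0 ^ 2 / 2 by norm_num]
    exact (het.const_mul k).add ((het.pow 2).div_const 2)
  have harat : Tendsto (fun n => a n / e n) atTop (𝓝 k) := by
    have heq : ∀ n, a n / e n = k + e n / 2 := fun n => by
      have := (hep n).ne'
      rw [ha_def]; field_simp
    have h : Tendsto (fun n => k + e n / 2) atTop (𝓝 (k + 0 / 2)) :=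
      tendsto_const_nhds.add (het.div_const 2)
    simpa [heq] using h
  have herat : Tendsto (fun n => e n / e n) atTop (𝓝 1) := by
    have : ∀ n, e n / e n = 1 := fun n => div_self (hep n).ne'
    simpa [this] using (tendsto_const_nhds : Tendsto (fun _ : ℕ => (1:ℝ)) atTop (𝓝 1))
  -- the functional equation with our sign convention
  have hsol' : ∀ n, (∫ ω, Real.exp (-(e n * ξ ω))) = ∫ ω, Real.exp (-(a n * τ ω)) := by
    intro n
    have h := hsol (e n) (hep n).le
    simp only [neg_mul] at h
    simp only [ha_def]
    exact h
  -- first-order approximants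
  set Aξ : ℕ → Ω → ℝ := fun n ω => (1 - Real.exp (-(e n * ξ ω))) / e n with hAξ_def
  set Aτ : ℕ → Ω → ℝ := fun n ω => (1 - Real.exp (-(a n * τ ω))) / e n with hAτ_def
  have hAξ_meas : ∀ n, Measurable (Aξ n) := fun n =>
    (measurable_const.sub ((hξm.const_mul (e n)).neg.exp)).div_const _
  have hAτ_meas : ∀ n, Measurable (Aτ n) := fun n =>
    (measurable_const.sub ((hτm.const_mul (a n)).neg.exp)).div_const _
  have hAξ_nonneg : ∀ n ω, 0 ≤ Aξ n ω := fun n ω => by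
    refine div_nonneg ?_ (hep n).le
    have h := Real.exp_le_one_iff.2 (neg_nonpos.2 (mul_nonneg (hep n).le (hξ ω)))
    linarith
  have hAτ_nonneg : ∀ n ω, 0 ≤ Aτ n ω := fun n ω => by
    refine div_nonneg ?_ (hep n).le
    have h := Real.exp_le_one_iff.2 (neg_nonpos.2 (mul_nonneg (hap n).le (hτ ω)))
    linarith
  have hAξ_int : ∀ n, Integrable (Aξ n) := fun n => by
    refine (integrable_const (1 / e n)).mono' (hAξ_meas n).aestronglyMeasurable
      (Eventually.of_forall fun ω => ?_)
    rw [Real.norm_eq_abs, abs_of_nonneg (hAξ_nonneg n ω)]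
    have h := Real.exp_pos (-(e n * ξ ω))
    simp only [hAξ_def]
    gcongr
    linarith
  have hAeq : ∀ n, ∫ ω, Aξ n ω = ∫ ω, Aτ n ω := by
    intro n
    have h1 : ∫ ω, (1 - Real.exp (-(e n * ξ ω))) = 1 - ∫ ω, Real.exp (-(e n * ξ ω)) := by
      rw [integral_sub (integrable_const 1) (hexp_int _ _ hξm hξ (hep n).le)]
      simp
    have h2 : ∫ ω, (1 - Real.exp (-(a n * τ ω))) = 1 - ∫ ω, Real.exp (-(a n * τ ω)) := by
      rw [integral_sub (integrable_const 1) (hexp_int _ _ hτm hτ (hap n).le)]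
      simp
    rw [hAξ_def, hAτ_def]
    simp only
    rw [integral_div, integral_div, h1, h2, hsol' n]
  have hane : ∀ n, a n / e n = k + e n / 2 := fun n => by
    have h := (hep n).ne'
    rw [ha_def]; field_simp
  have hAτ_tendsto : Tendsto (fun n => ∫ ω, Aτ n ω) atTop (𝓝 (k * ∫ ω, τ ω)) := by
    rw [show k * ∫ ω, τ ω = ∫ ω, k * τ ω from (integral_const_mul k τ).symm]
    refine tendsto_integral_of_dominated_convergence (f := fun ω => k * τ ω)
      (fun ω => (k + 1) * τ ω)
      (fun n => (hAτ_meas n).aestronglyMeasurable) (hτ1.const_mul (k + 1))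
      (fun n => Eventually.of_forall fun ω => ?_) (Eventually.of_forall fun ω => ?_)
    · rw [Real.norm_eq_abs, abs_of_nonneg (hAτ_nonneg n ω)]
      simp only [hAτ_def]
      calc (1 - Real.exp (-(a n * τ ω))) / e n ≤ (a n * τ ω) / e n :=
            (div_le_div_iff_of_pos_right (hep n)).2 (mnc_L1 _)
        _ = (a n / e n) * τ ω := by
            have h := (hep n).ne'; field_simp
        _ = (k + e n / 2) * τ ω := by rw [hane n]
        _ ≤ (k + 1) * τ ω := by
            have h1 := he1 n; have h2 := hτ ω; nlinarith
    · exact mnc_P1 hep (fun m => (hap m).le) hat harat (hτ ω)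
  have hAξI : Tendsto (fun n => ∫ ω, Aξ n ω) atTop (𝓝 (k * ∫ ω, τ ω)) := by
    have h : (fun n => ∫ ω, Aξ n ω) = fun n => ∫ ω, Aτ n ω := funext hAeq
    rw [h]; exact hAτ_tendsto
  have hAξpt : ∀ ω, Tendsto (fun n => Aξ n ω) atTop (𝓝 (ξ ω)) := fun ω => by
    have h := mnc_P1 hep (fun m => (hep m).le) het herat (hξ ω)
    simpa using h
  have hξint : Integrable ξ := by
    refine ⟨hξm.aestronglyMeasurable, ?_⟩
    rw [hasFiniteIntegral_iff_ofReal (Eventually.of_forall hξ)]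
    have hfat : ∫⁻ ω, ENNReal.ofReal (ξ ω) ≤ ENNReal.ofReal (k * ∫ ω, τ ω) := by
      have hpt : ∀ ω, Tendsto (fun n => ENNReal.ofReal (Aξ n ω)) atTop
          (𝓝 (ENNReal.ofReal (ξ ω))) := fun ω =>
        (ENNReal.continuous_ofReal.tendsto _).comp (hAξpt ω)
      calc ∫⁻ ω, ENNReal.ofReal (ξ ω)
          = ∫⁻ ω, liminf (fun n => ENNReal.ofReal (Aξ n ω)) atTop :=
            lintegral_congr fun ω => ((hpt ω).liminf_eq).symm
        _ ≤ liminf (fun n => ∫⁻ ω, ENNReal.ofReal (Aξ n ω)) atTop :=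
            lintegral_liminf_le fun n => (hAξ_meas n).ennreal_ofReal
        _ = liminf (fun n => ENNReal.ofReal (∫ ω, Aξ n ω)) atTop := by
            congr 1
            funext n
            exact (ofReal_integral_eq_lintegral_ofReal (hAξ_int n)
              (Eventually.of_forall (hAξ_nonneg n))).symm
        _ = ENNReal.ofReal (k * ∫ ω, τ ω) :=
            ((ENNReal.continuous_ofReal.tendsto _).comp hAξI).liminf_eq
    exact lt_of_le_of_lt hfat ENNReal.ofReal_lt_top
  have hAξ_tendsto : Tendsto (fun n => ∫ ω, Aξ n ω) atTop (𝓝 (∫ ω, ξ ω)) := by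
    refine tendsto_integral_of_dominated_convergence ξ
      (fun n => (hAξ_meas n).aestronglyMeasurable) hξint
      (fun n => Eventually.of_forall fun ω => ?_) (Eventually.of_forall hAξpt)
    rw [Real.norm_eq_abs, abs_of_nonneg (hAξ_nonneg n ω)]
    simp only [hAξ_def]
    calc (1 - Real.exp (-(e n * ξ ω))) / e n ≤ (e n * ξ ω) / e n :=
          (div_le_div_iff_of_pos_right (hep n)).2 (mnc_L1 _)
      _ = ξ ω := by
          rw [mul_comm, mul_div_assoc, div_self (hep n).ne', mul_one]
  have hEq1 : (∫ ω, ξ ω) = k * ∫ ω, τ ω := tendsto_nhds_unique hAξ_tendsto hAξI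
  -- second-order approximants
  set Bξ : ℕ → Ω → ℝ := fun n ω => (Real.exp (-(e n * ξ ω)) - 1 + e n * ξ ω) / (e n) ^ 2
    with hBξ_def
  set Bτ : ℕ → Ω → ℝ := fun n ω => (Real.exp (-(a n * τ ω)) - 1 + a n * τ ω) / (e n) ^ 2
    with hBτ_def
  have hBξ_meas : ∀ n, Measurable (Bξ n) := fun n =>
    (((hξm.const_mul (e n)).neg.exp.sub measurable_const).add
      (hξm.const_mul (e n))).div_const _
  have hBτ_meas : ∀ n, Measurable (Bτ n) := fun n =>
    (((hτm.const_mul (a n)).neg.exp.sub measurable_const).add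
      (hτm.const_mul (a n))).div_const _
  have hBξ_nonneg : ∀ n ω, 0 ≤ Bξ n ω := fun n ω =>
    div_nonneg (mnc_L2 _) (sq_nonneg _)
  have hBτ_nonneg : ∀ n ω, 0 ≤ Bτ n ω := fun n ω =>
    div_nonneg (mnc_L2 _) (sq_nonneg _)
  have hBξ_int : ∀ n, Integrable (Bξ n) := fun n => by
    refine ((hξint.const_mul (1 / e n)).mono' (hBξ_meas n).aestronglyMeasurable
      (Eventually.of_forall fun ω => ?_))
    rw [Real.norm_eq_abs, abs_of_nonneg (hBξ_nonneg n ω)]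
    simp only [hBξ_def]
    have hle : Real.exp (-(e n * ξ ω)) - 1 + e n * ξ ω ≤ e n * ξ ω := by
      have h := Real.exp_le_one_iff.2 (neg_nonpos.2 (mul_nonneg (hep n).le (hξ ω)))
      linarith
    calc (Real.exp (-(e n * ξ ω)) - 1 + e n * ξ ω) / (e n) ^ 2 ≤ (e n * ξ ω) / (e n) ^ 2 := by
          gcongr
      _ = 1 / e n * ξ ω := by
          have h := (hep n).ne'; field_simp
  have hBeq : ∀ n, ∫ ω, Bξ n ω = (∫ ω, Bτ n ω) - (∫ ω, τ ω) / 2 := by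
    intro n
    have hintξ : ∫ ω, (Real.exp (-(e n * ξ ω)) - 1 + e n * ξ ω)
        = (∫ ω, Real.exp (-(e n * ξ ω))) - 1 + e n * ∫ ω, ξ ω := by
      have ha : Integrable (fun ω => Real.exp (-(e n * ξ ω)) - 1) :=
        (hexp_int _ _ hξm hξ (hep n).le).sub (integrable_const 1)
      have hb : Integrable (fun ω => e n * ξ ω) := hξint.const_mul (e n)
      rw [integral_add ha hb,
        integral_sub (hexp_int _ _ hξm hξ (hep n).le) (integrable_const 1),
        integral_const_mul, integral_const]
      simp
    have hintτ : ∫ ω, (Real.exp (-(a n * τ ω)) - 1 + a n * τ ω)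
        = (∫ ω, Real.exp (-(a n * τ ω))) - 1 + a n * ∫ ω, τ ω := by
      have ha : Integrable (fun ω => Real.exp (-(a n * τ ω)) - 1) :=
        (hexp_int _ _ hτm hτ (hap n).le).sub (integrable_const 1)
      have hb : Integrable (fun ω => a n * τ ω) := hτ1.const_mul (a n)
      rw [integral_add ha hb,
        integral_sub (hexp_int _ _ hτm hτ (hap n).le) (integrable_const 1),
        integral_const_mul, integral_const]
      simp
    simp only [hBξ_def, hBτ_def]
    rw [integral_div, integral_div, hintξ, hintτ, hsol' n, hEq1]
    have h := (hep n).ne'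
    rw [ha_def]
    field_simp
    ring
  have hBτ_tendsto : Tendsto (fun n => ∫ ω, Bτ n ω) atTop
      (𝓝 (k ^ 2 * (∫ ω, τ ω ^ 2) / 2)) := by
    rw [show k ^ 2 * (∫ ω, τ ω ^ 2) / 2 = ∫ ω, k ^ 2 * τ ω ^ 2 / 2 by
      rw [integral_div, integral_const_mul]]
    refine tendsto_integral_of_dominated_convergence (f := fun ω => k ^ 2 * τ ω ^ 2 / 2)
      (fun ω => (k + 1) ^ 2 * τ ω ^ 2)
      (fun n => (hBτ_meas n).aestronglyMeasurable) (hτ2.const_mul ((k + 1) ^ 2))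
      (fun n => Eventually.of_forall fun ω => ?_) (Eventually.of_forall fun ω => ?_)
    · rw [Real.norm_eq_abs, abs_of_nonneg (hBτ_nonneg n ω)]
      simp only [hBτ_def]
      calc (Real.exp (-(a n * τ ω)) - 1 + a n * τ ω) / (e n) ^ 2
          ≤ (a n * τ ω) ^ 2 / (e n) ^ 2 := by
            gcongr
            exact mnc_L3 (mul_nonneg (hap n).le (hτ ω))
        _ = (a n / e n) ^ 2 * τ ω ^ 2 := by
            have h := (hep n).ne'; field_simp
        _ ≤ (k + 1) ^ 2 * τ ω ^ 2 := by
            have h1 := he1 n; have h2 := (hep n).le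
            have h3 : a n / e n ≤ k + 1 := by rw [hane n]; linarith
            have h4 : 0 ≤ a n / e n := div_nonneg (hap n).le (hep n).le
            have h5 : (a n / e n) ^ 2 ≤ (k + 1) ^ 2 := by nlinarith
            exact mul_le_mul_of_nonneg_right h5 (sq_nonneg _)
    · exact mnc_P2 hep (fun m => (hap m).le) hat harat (hτ ω)
  have hBτI : Tendsto (fun n => ∫ ω, Bξ n ω) atTop
      (𝓝 (k ^ 2 * (∫ ω, τ ω ^ 2) / 2 - (∫ ω, τ ω) / 2)) := by
    have h : (fun n => ∫ ω, Bξ n ω) = fun n => (∫ ω, Bτ n ω) - (∫ ω, τ ω) / 2 :=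
      funext hBeq
    rw [h]
    exact hBτ_tendsto.sub_const _
  have hBξpt : ∀ ω, Tendsto (fun n => Bξ n ω) atTop (𝓝 (ξ ω ^ 2 / 2)) := fun ω => by
    have h := mnc_P2 hep (fun m => (hep m).le) het herat (hξ ω)
    simpa using h
  have hξ2half : Integrable (fun ω => ξ ω ^ 2 / 2) := by
    refine ⟨((hξm.pow_const 2).div_const 2).aestronglyMeasurable, ?_⟩
    rw [hasFiniteIntegral_iff_ofReal (Eventually.of_forall fun ω => by positivity)]
    have hfat : ∫⁻ ω, ENNReal.ofReal (ξ ω ^ 2 / 2)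
        ≤ ENNReal.ofReal (k ^ 2 * (∫ ω, τ ω ^ 2) / 2 - (∫ ω, τ ω) / 2) := by
      have hpt : ∀ ω, Tendsto (fun n => ENNReal.ofReal (Bξ n ω)) atTop
          (𝓝 (ENNReal.ofReal (ξ ω ^ 2 / 2))) := fun ω =>
        (ENNReal.continuous_ofReal.tendsto _).comp (hBξpt ω)
      calc ∫⁻ ω, ENNReal.ofReal (ξ ω ^ 2 / 2)
          = ∫⁻ ω, liminf (fun n => ENNReal.ofReal (Bξ n ω)) atTop :=
            lintegral_congr fun ω => ((hpt ω).liminf_eq).symm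
        _ ≤ liminf (fun n => ∫⁻ ω, ENNReal.ofReal (Bξ n ω)) atTop :=
            lintegral_liminf_le fun n => (hBξ_meas n).ennreal_ofReal
        _ = liminf (fun n => ENNReal.ofReal (∫ ω, Bξ n ω)) atTop := by
            congr 1
            funext n
            exact (ofReal_integral_eq_lintegral_ofReal (hBξ_int n)
              (Eventually.of_forall (hBξ_nonneg n))).symm
        _ = ENNReal.ofReal (k ^ 2 * (∫ ω, τ ω ^ 2) / 2 - (∫ ω, τ ω) / 2) :=
            ((ENNReal.continuous_ofReal.tendsto _).comp hBτI).liminf_eq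
    exact lt_of_le_of_lt hfat ENNReal.ofReal_lt_top
  have hξ2 : Integrable (fun ω => ξ ω ^ 2) := by
    have h := hξ2half.const_mul 2
    refine h.congr (Eventually.of_forall fun ω => ?_)
    ring
  have hBξ_tendsto : Tendsto (fun n => ∫ ω, Bξ n ω) atTop (𝓝 (∫ ω, ξ ω ^ 2 / 2)) := by
    refine tendsto_integral_of_dominated_convergence (f := fun ω => ξ ω ^ 2 / 2)
      (fun ω => ξ ω ^ 2)
      (fun n => (hBξ_meas n).aestronglyMeasurable) hξ2
      (fun n => Eventually.of_forall fun ω => ?_) (Eventually.of_forall hBξpt)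
    rw [Real.norm_eq_abs, abs_of_nonneg (hBξ_nonneg n ω)]
    simp only [hBξ_def]
    calc (Real.exp (-(e n * ξ ω)) - 1 + e n * ξ ω) / (e n) ^ 2
        ≤ (e n * ξ ω) ^ 2 / (e n) ^ 2 := by
          gcongr
          exact mnc_L3 (mul_nonneg (hep n).le (hξ ω))
      _ = ξ ω ^ 2 := by
          have h := (hep n).ne'; field_simp
  have hEq2' : (∫ ω, ξ ω ^ 2 / 2) = k ^ 2 * (∫ ω, τ ω ^ 2) / 2 - (∫ ω, τ ω) / 2 :=
    tendsto_nhds_unique hBξ_tendsto hBτI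
  have hEq2 : (∫ ω, ξ ω ^ 2) = k ^ 2 * (∫ ω, τ ω ^ 2) - ∫ ω, τ ω := by
    have h : (∫ ω, ξ ω ^ 2 / 2) = (∫ ω, ξ ω ^ 2) / 2 := by
      rw [integral_div]
    rw [h] at hEq2'
    linarith
  refine ⟨hEq1, hEq2, ?_⟩
  -- the inequality
  have hMτ : MemLp τ 2 := (memLp_two_iff_integrable_sq hτm.aestronglyMeasurable).2 hτ2
  have hMξ : MemLp ξ 2 := (memLp_two_iff_integrable_sq hξm.aestronglyMeasurable).2 hξ2
  have hvτ : variance τ volume = (∫ ω, τ ω ^ 2) - (∫ ω, τ ω) ^ 2 := by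
    rw [variance_eq_sub hMτ]
    simp [Pi.pow_apply]
  have hvξ : variance ξ volume = (∫ ω, ξ ω ^ 2) - (∫ ω, ξ ω) ^ 2 := by
    rw [variance_eq_sub hMξ]
    simp [Pi.pow_apply]
  have hvξ0 : 0 ≤ variance ξ volume := variance_nonneg ξ volume
  have hτI : 0 ≤ ∫ ω, τ ω := integral_nonneg hτ
  have hkey : (∫ ω, τ ω) ≤ k ^ 2 * variance τ volume := by
    rw [hvτ]
    rw [hvξ, hEq2, hEq1] at hvξ0
    nlinarith
  rw [div_le_iff₀ (Real.sqrt_pos.2 hvar)]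
  have h : k * Real.sqrt (variance τ volume) = Real.sqrt (k ^ 2 * variance τ volume) := by
    rw [Real.sqrt_mul (sq_nonneg k), Real.sqrt_sq hk.le]
  rw [h]
  exact Real.sqrt_le_sqrt hkey
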